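/- Let r ≥ 3, d ≥ 3, let H be an r-uniform supertree with a vertex u, and let 2 ≤ i ≤ d. Then φ(P_d^r(e_{⌈d/2⌉},u)H, x) − φ(P_d^r(v_i,u)H, x) = x^{r−3} · Σ_{e ∈ E_u(H)} φ(H − V(e), x) · ( x^{r−1}·φ(P_{i−2}^r, x)·φ(P_{d−i}^r, x) − φ(P_{⌊d/2⌋}^r, x)·φ(P_{⌈d/2⌉−1}^r, x) ), where P_d^r(v_i,u)H is obtained by identifying the joint vertex v_i of the loose path P_d^r with u, and P_d^r(e_{⌈d/2⌉},u)H is obtained by identifying a fixed core (non-joint) vertex of the edge e_{⌈d/2⌉} of P_d^r with u. -/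

import Mathlib

open Classical

noncomputable section

/-- A finite hypergraph: a finite vertex set together with a finite set of edges,
each edge being a finite set of vertices. -/
structure FinHypergraph (α : Type*) where
  verts : Finset α
  edges : Finset (Finset α)

namespace FinHypergraph

variable {α : Type*}

/-- Every edge of `H` is a subset of the vertex set of `H`. -/
def WellFormed (H : FinHypergraph α) : Prop := ∀ e ∈ H.edges, e ⊆ H.verts

/-- `H` is `r`-uniform: every edge has exactly `r` vertices. -/
def Uniform (H : FinHypergraph α) (r : ℕ) : Prop := ∀ e ∈ H.edges, e.card = r

/-- A set of edges is a matching if its members are pairwise disjoint. -/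
def IsMatchingSet (M : Finset (Finset α)) : Prop :=
  ∀ e ∈ M, ∀ f ∈ M, e ≠ f → Disjoint e f

/-- `m(H,k)`: the number of matchings of `H` consisting of exactly `k` edges. -/
noncomputable def matchCount (H : FinHypergraph α) (k : ℕ) : ℕ :=
  (H.edges.powerset.filter (fun M => M.card = k ∧ IsMatchingSet M)).card

/-- The matching polynomial `φ(H,x) = Σ_k (-1)^k m(H,k) x^(n - r·k)` of an
`r`-uniform hypergraph `H` with `n` vertices, evaluated at a real number `x`. -/
noncomputable def matchPoly (H : FinHypergraph α) (r : ℕ) (x : ℝ) : ℝ :=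
  ∑ k ∈ Finset.range (H.verts.card + 1),
    (-1 : ℝ) ^ k * (H.matchCount k : ℝ) * x ^ (H.verts.card - r * k)

/-- `H − S`: delete the vertices of `S` and all edges meeting `S`. -/
def removeVerts (H : FinHypergraph α) (S : Finset α) : FinHypergraph α :=
  ⟨H.verts \ S, H.edges.filter (fun e => Disjoint e S)⟩

/-- `H` is connected: nonempty vertex set, and any two vertices are linked by a chain of
vertices successively lying in a common edge. -/
def Connected (H : FinHypergraph α) : Prop :=
  H.verts.Nonempty ∧ ∀ u ∈ H.verts, ∀ v ∈ H.verts,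
    Relation.ReflTransGen (fun a b => ∃ e ∈ H.edges, a ∈ e ∧ b ∈ e) u v

/-- `H` has a cycle: an alternating sequence `v_0 e_0 v_1 e_1 … v_{ℓ-1} e_{ℓ-1} v_0`
(with `ℓ ≥ 2`) of distinct vertices and distinct edges such that consecutive vertices lie
in the intermediate edge. -/
def HasCycle (H : FinHypergraph α) : Prop :=
  ∃ (ℓ : ℕ) (v : ℕ → α) (e : ℕ → Finset α), 2 ≤ ℓ ∧
    Set.InjOn v (Set.Iio ℓ) ∧ Set.InjOn e (Set.Iio ℓ) ∧
    ∀ i < ℓ, e i ∈ H.edges ∧ v i ∈ e i ∧ v ((i + 1) % ℓ) ∈ e i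

/-- An `r`-uniform supertree: a connected acyclic `r`-uniform hypergraph. -/
def IsSupertree (H : FinHypergraph α) (r : ℕ) : Prop :=
  H.WellFormed ∧ H.Uniform r ∧ H.Connected ∧ ¬ H.HasCycle

/-- The edges of the `r`-uniform loose path of length `p` along the vertex labelling `w`:
the `i`-th edge consists of the `r` vertices `w (i*(r-1)), …, w ((i+1)*(r-1))`, so that
consecutive edges share exactly one vertex. -/
def loosePathEdges (r p : ℕ) (w : ℕ → α) : Finset (Finset α) :=
  (Finset.range p).image (fun i => (Finset.Icc (i * (r - 1)) ((i + 1) * (r - 1))).image w)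

/-- `P` is an `r`-uniform loose path with `m` edges (`P_m^r`); for `m = 0` it is a single
vertex with no edge. -/
def IsLoosePath (r m : ℕ) (P : FinHypergraph α) : Prop :=
  ∃ w : ℕ → α, Set.InjOn w (Set.Iic (m * (r - 1))) ∧
    P.verts = (Finset.Icc 0 (m * (r - 1))).image w ∧
    P.edges = loosePathEdges r m w

/-- `T'` is obtained from the disjoint union of the loose path `P_d^r` and `H` by
identifying the path vertex with label `c` with the vertex `u` of `H` (all other path
vertices being new). -/
def IsPathIdentify (r d c : ℕ) (H : FinHypergraph α) (u : α) (T' : FinHypergraph α) : Prop :=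
  ∃ w : ℕ → α, Set.InjOn w (Set.Iic (d * (r - 1))) ∧ w c = u ∧
    (∀ t, t ≤ d * (r - 1) → t ≠ c → w t ∉ H.verts) ∧
    T'.verts = H.verts ∪ (Finset.Icc 0 (d * (r - 1))).image w ∧
    T'.edges = H.edges ∪ loosePathEdges r d w

-- ==================== auxiliary ====================

noncomputable def matchings (H : FinHypergraph α) : Finset (Finset (Finset α)) :=
  H.edges.powerset.filter (fun M => IsMatchingSet M)

lemma mem_matchings {H : FinHypergraph α} {M : Finset (Finset α)} :
    M ∈ H.matchings ↔ M ⊆ H.edges ∧ IsMatchingSet M := by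
  simp [matchings, Finset.mem_filter, Finset.mem_powerset]

lemma matching_mul_card_le {H : FinHypergraph α} {r : ℕ} (hwf : H.WellFormed) (hun : H.Uniform r)
    {M : Finset (Finset α)} (hM : M ∈ H.matchings) : r * M.card ≤ H.verts.card := by
  rw [mem_matchings] at hM
  obtain ⟨hsub, hmatch⟩ := hM
  have hbu : M.biUnion (fun e => e) ⊆ H.verts := by
    intro a ha
    simp only [Finset.mem_biUnion] at ha
    obtain ⟨e, he, hae⟩ := ha
    exact hwf e (hsub he) hae
  calc r * M.card = (M.biUnion (fun e => e)).card := by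
        rw [Finset.card_biUnion (fun e he f hf hne => hmatch e he f hf hne)]
        rw [Finset.sum_congr rfl (fun e he => hun e (hsub he))]
        simp [mul_comm]
    _ ≤ H.verts.card := Finset.card_le_card hbu

lemma matchPoly_eq_sum {H : FinHypergraph α} {r : ℕ} (hr : 1 ≤ r) (hwf : H.WellFormed)
    (hun : H.Uniform r) (x : ℝ) :
    H.matchPoly r x
      = ∑ M ∈ H.matchings, (-1 : ℝ) ^ M.card * x ^ (H.verts.card - r * M.card) := by
  rw [matchPoly,
    ← Finset.sum_fiberwise_of_maps_to (g := Finset.card)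
      (t := Finset.range (H.verts.card + 1))
      (fun M hM => by
        have h1 := matching_mul_card_le hwf hun hM
        have h2 : M.card ≤ r * M.card := Nat.le_mul_of_pos_left _ hr
        exact Finset.mem_range.mpr (by omega))]
  refine Finset.sum_congr rfl (fun k _ => ?_)
  have hset : H.matchings.filter (fun M => M.card = k)
      = H.edges.powerset.filter (fun M => M.card = k ∧ IsMatchingSet M) := by
    rw [matchings, Finset.filter_filter]
    exact Finset.filter_congr (fun M hM => by tauto)
  refine Eq.symm ?_
  calc ∑ M ∈ H.matchings.filter (fun M => M.card = k),
          (-1 : ℝ) ^ M.card * x ^ (H.verts.card - r * M.card)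
      = ∑ _M ∈ H.matchings.filter (fun M => M.card = k),
          (-1 : ℝ) ^ k * x ^ (H.verts.card - r * k) := by
        refine Finset.sum_congr rfl (fun M hM => ?_)
        rw [(Finset.mem_filter.mp hM).2]
    _ = (-1 : ℝ) ^ k * (H.matchCount k : ℝ) * x ^ (H.verts.card - r * k) := by
        rw [Finset.sum_const, hset, matchCount]
        push_cast
        ring


lemma matchings_edgeless {H : FinHypergraph α} (h : H.edges = ∅) :
    H.matchings = {∅} := by
  apply Finset.ext
  intro M
  simp only [mem_matchings, h, Finset.subset_empty, Finset.mem_singleton]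
  constructor
  · rintro ⟨rfl, -⟩; rfl
  · rintro rfl
    exact ⟨rfl, fun e he => absurd he (by simp)⟩

lemma matchPoly_edgeless {H : FinHypergraph α} (h : H.edges = ∅) (r : ℕ) (hr : 1 ≤ r) (x : ℝ) :
    H.matchPoly r x = x ^ H.verts.card := by
  rw [matchPoly_eq_sum hr (fun e he => by simp [h] at he) (fun e he => by simp [h] at he) x,
    matchings_edgeless h]
  simp

lemma wellFormed_union {G G1 G2 : FinHypergraph α} (hv : G.verts = G1.verts ∪ G2.verts)
    (he : G.edges = G1.edges ∪ G2.edges) (h1 : G1.WellFormed) (h2 : G2.WellFormed) :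
    G.WellFormed := by
  intro e hee
  rw [he, Finset.mem_union] at hee
  rw [hv]
  rcases hee with h | h
  · exact (h1 e h).trans Finset.subset_union_left
  · exact (h2 e h).trans Finset.subset_union_right

lemma uniform_union {r : ℕ} {G G1 G2 : FinHypergraph α}
    (he : G.edges = G1.edges ∪ G2.edges) (h1 : G1.Uniform r) (h2 : G2.Uniform r) :
    G.Uniform r := by
  intro e hee
  rw [he, Finset.mem_union] at hee
  rcases hee with h | h
  · exact h1 e h
  · exact h2 e h

/-- Product lemma: matching polynomial of a disjoint union is the product. -/
lemma matchPoly_mul {r : ℕ} (hr : 1 ≤ r) (G G1 G2 : FinHypergraph α)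
    (hv : G.verts = G1.verts ∪ G2.verts) (hdv : Disjoint G1.verts G2.verts)
    (he : G.edges = G1.edges ∪ G2.edges)
    (h1 : G1.WellFormed) (h2 : G2.WellFormed) (hu1 : G1.Uniform r) (hu2 : G2.Uniform r)
    (x : ℝ) :
    G.matchPoly r x = G1.matchPoly r x * G2.matchPoly r x := by
  have hwf : G.WellFormed := wellFormed_union hv he h1 h2
  have hun : G.Uniform r := uniform_union he hu1 hu2
  have hde : ∀ e, e ∈ G1.edges → e ∈ G2.edges → False := by
    intro e he1 he2
    have hsub : e ⊆ G1.verts ∩ G2.verts := Finset.subset_inter (h1 e he1) (h2 e he2)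
    rw [Finset.disjoint_iff_inter_eq_empty.mp hdv, Finset.subset_empty] at hsub
    have := hu1 e he1
    rw [hsub] at this
    simp at this
    omega
  have hcardv : G.verts.card = G1.verts.card + G2.verts.card := by
    rw [hv, Finset.card_union_of_disjoint hdv]
  rw [matchPoly_eq_sum hr hwf hun x, matchPoly_eq_sum hr h1 hu1 x,
    matchPoly_eq_sum hr h2 hu2 x, Finset.sum_mul_sum, ← Finset.sum_product']
  refine Finset.sum_nbij' (fun M => (M ∩ G1.edges, M ∩ G2.edges)) (fun p => p.1 ∪ p.2)
    ?_ ?_ ?_ ?_ ?_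
  · intro M hM
    rw [mem_matchings] at hM
    obtain ⟨hsub, hmatch⟩ := hM
    rw [Finset.mem_product]
    constructor <;>
    · rw [mem_matchings]
      exact ⟨Finset.inter_subset_right, fun e hee f hf hne =>
        hmatch e (Finset.mem_of_mem_inter_left hee) f (Finset.mem_of_mem_inter_left hf) hne⟩
  · intro p hp
    rw [Finset.mem_product, mem_matchings, mem_matchings] at hp
    obtain ⟨⟨hs1, hm1⟩, hs2, hm2⟩ := hp
    rw [mem_matchings]
    constructor
    · rw [he]
      exact Finset.union_subset (hs1.trans Finset.subset_union_left)
        (hs2.trans Finset.subset_union_right)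
    · intro e hee f hf hne
      rw [Finset.mem_union] at hee hf
      rcases hee with h | h <;> rcases hf with h' | h'
      · exact hm1 e h f h' hne
      · exact Finset.disjoint_left.mpr (fun a ha haf =>
          (Finset.disjoint_left.mp hdv) (h1 e (hs1 h) ha) (h2 f (hs2 h') haf))
      · exact Finset.disjoint_left.mpr (fun a ha haf =>
          (Finset.disjoint_left.mp hdv) (h1 f (hs1 h') haf) (h2 e (hs2 h) ha))
      · exact hm2 e h f h' hne
  · intro M hM
    rw [mem_matchings] at hM
    show M ∩ G1.edges ∪ M ∩ G2.edges = M
    rw [← Finset.inter_union_distrib_left, ← he, Finset.inter_eq_left]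
    exact hM.1
  · intro p hp
    rw [Finset.mem_product, mem_matchings, mem_matchings] at hp
    obtain ⟨⟨hs1, hm1⟩, hs2, hm2⟩ := hp
    have h12 : p.1 ∩ G2.edges = ∅ := by
      apply Finset.eq_empty_of_forall_notMem
      intro e hee
      exact hde e (hs1 (Finset.mem_of_mem_inter_left hee))
        (Finset.mem_of_mem_inter_right hee)
    have h21 : p.2 ∩ G1.edges = ∅ := by
      apply Finset.eq_empty_of_forall_notMem
      intro e hee
      exact hde e (Finset.mem_of_mem_inter_right hee)
        (hs2 (Finset.mem_of_mem_inter_left hee))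
    have e1 : (p.1 ∪ p.2) ∩ G1.edges = p.1 := by
      rw [Finset.union_inter_distrib_right, h21, Finset.union_empty,
        Finset.inter_eq_left.mpr hs1]
    have e2 : (p.1 ∪ p.2) ∩ G2.edges = p.2 := by
      rw [Finset.union_inter_distrib_right, h12, Finset.empty_union,
        Finset.inter_eq_left.mpr hs2]
    exact Prod.ext e1 e2
  · intro M hM
    have hM' := hM
    rw [mem_matchings] at hM'
    obtain ⟨hsub, hmatch⟩ := hM'
    have hdisj : Disjoint (M ∩ G1.edges) (M ∩ G2.edges) := by
      rw [Finset.disjoint_left]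
      intro e hee hee2
      exact hde e (Finset.mem_of_mem_inter_right hee) (Finset.mem_of_mem_inter_right hee2)
    have hcard : M.card = (M ∩ G1.edges).card + (M ∩ G2.edges).card := by
      rw [← Finset.card_union_of_disjoint hdisj, ← Finset.inter_union_distrib_left, ← he,
        Finset.inter_eq_left.mpr hsub]
    have hm1 : M ∩ G1.edges ∈ G1.matchings := mem_matchings.mpr
      ⟨Finset.inter_subset_right, fun e hee f hf hne =>
        hmatch e (Finset.mem_of_mem_inter_left hee) f (Finset.mem_of_mem_inter_left hf) hne⟩
    have hm2 : M ∩ G2.edges ∈ G2.matchings := mem_matchings.mpr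
      ⟨Finset.inter_subset_right, fun e hee f hf hne =>
        hmatch e (Finset.mem_of_mem_inter_left hee) f (Finset.mem_of_mem_inter_left hf) hne⟩
    have hb1 := matching_mul_card_le h1 hu1 hm1
    have hb2 := matching_mul_card_le h2 hu2 hm2
    have hexp : G.verts.card - r * ((M ∩ G1.edges).card + (M ∩ G2.edges).card)
        = (G1.verts.card - r * (M ∩ G1.edges).card)
          + (G2.verts.card - r * (M ∩ G2.edges).card) := by
      rw [hcardv]
      have : r * ((M ∩ G1.edges).card + (M ∩ G2.edges).card)
          = r * (M ∩ G1.edges).card + r * (M ∩ G2.edges).card := by ring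
      omega
    simp only
    rw [hcard, hexp, pow_add, pow_add]
    ring


lemma removeVerts_wellFormed {H : FinHypergraph α} (hwf : H.WellFormed) (S : Finset α) :
    (H.removeVerts S).WellFormed := by
  intro e he
  simp only [removeVerts, Finset.mem_filter] at he
  intro a ha
  simp only [removeVerts, Finset.mem_sdiff]
  exact ⟨hwf e he.1 ha, fun haS => Finset.disjoint_left.mp he.2 ha haS⟩

lemma removeVerts_uniform {H : FinHypergraph α} {r : ℕ} (hun : H.Uniform r) (S : Finset α) :
    (H.removeVerts S).Uniform r := by
  intro e he
  simp only [removeVerts, Finset.mem_filter] at he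
  exact hun e he.1

/-- Vertex deletion lemma. -/
lemma matchPoly_delete {r : ℕ} (hr : 1 ≤ r) (G : FinHypergraph α) (hwf : G.WellFormed)
    (hun : G.Uniform r) (u : α) (hu : u ∈ G.verts) (x : ℝ) :
    G.matchPoly r x = x * (G.removeVerts {u}).matchPoly r x
      - ∑ f ∈ G.edges.filter (fun f => u ∈ f), (G.removeVerts f).matchPoly r x := by
  have hwfu := removeVerts_wellFormed hwf ({u} : Finset α)
  have hunu := removeVerts_uniform hun ({u} : Finset α)
  have hn1 : 1 ≤ G.verts.card := Finset.card_pos.mpr ⟨u, hu⟩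
  have hcardu : (G.removeVerts {u}).verts.card = G.verts.card - 1 := by
    simp only [removeVerts]
    rw [Finset.card_sdiff_of_subset (Finset.singleton_subset_iff.mpr hu), Finset.card_singleton]
  rw [matchPoly_eq_sum hr hwf hun x,
    ← Finset.sum_filter_add_sum_filter_not G.matchings (fun M => ∀ e ∈ M, u ∉ e)]
  have hpart1 : ∑ M ∈ G.matchings.filter (fun M => ∀ e ∈ M, u ∉ e),
      (-1:ℝ)^M.card * x^(G.verts.card - r*M.card)
      = x * (G.removeVerts {u}).matchPoly r x := by
    rw [matchPoly_eq_sum hr hwfu hunu x, Finset.mul_sum]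
    have hset : G.matchings.filter (fun M => ∀ e ∈ M, u ∉ e)
        = (G.removeVerts {u}).matchings := by
      apply Finset.ext
      intro M
      simp only [Finset.mem_filter, mem_matchings, removeVerts]
      constructor
      · rintro ⟨⟨hsub, hm⟩, hvert⟩
        exact ⟨fun e he => Finset.mem_filter.mpr
          ⟨hsub he, Finset.disjoint_singleton_right.mpr (hvert e he)⟩, hm⟩
      · rintro ⟨hsub, hm⟩
        exact ⟨⟨fun e he => (Finset.mem_filter.mp (hsub he)).1, hm⟩,
          fun e he => Finset.disjoint_singleton_right.mp (Finset.mem_filter.mp (hsub he)).2⟩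
    rw [hset]
    refine Finset.sum_congr rfl (fun M hM => ?_)
    have hle := matching_mul_card_le hwfu hunu hM
    rw [hcardu] at hle
    have hexp : G.verts.card - r * M.card = (G.verts.card - 1 - r * M.card) + 1 := by omega
    rw [hcardu, hexp, pow_succ]
    ring
  have hpart2 : ∑ M ∈ G.matchings.filter (fun M => ¬ ∀ e ∈ M, u ∉ e),
      (-1:ℝ)^M.card * x^(G.verts.card - r*M.card)
      = ∑ f ∈ G.edges.filter (fun f => u ∈ f), -((G.removeVerts f).matchPoly r x) := by
    have hstep : ∀ f ∈ G.edges.filter (fun f => u ∈ f),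
        -((G.removeVerts f).matchPoly r x)
        = ∑ M' ∈ (G.removeVerts f).matchings,
            -((-1:ℝ)^M'.card * x^((G.removeVerts f).verts.card - r*M'.card)) := by
      intro f hf
      rw [matchPoly_eq_sum hr (removeVerts_wellFormed hwf f) (removeVerts_uniform hun f) x,
        ← Finset.sum_neg_distrib]
    rw [Finset.sum_congr rfl hstep, Finset.sum_sigma']
    refine (Finset.sum_nbij'
      (i := fun p => insert p.1 p.2)
      (j := fun M => ⟨(M.filter (fun e => u ∈ e)).sup id, M.filter (fun e => u ∉ e)⟩)
      ?_ ?_ ?_ ?_ ?_).symm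
    · -- hi : insert p.1 p.2 ∈ cover set
      rintro ⟨f, M'⟩ hp
      rw [Finset.mem_sigma, Finset.mem_filter, mem_matchings] at hp
      obtain ⟨⟨hfe, hfu⟩, hsub, hm⟩ := hp
      have hdisjf : ∀ e ∈ M', Disjoint e f := by
        intro e he
        have := hsub he
        simp only [removeVerts, Finset.mem_filter] at this
        exact this.2
      rw [Finset.mem_filter, mem_matchings]
      refine ⟨⟨?_, ?_⟩, ?_⟩
      · intro e he
        rcases Finset.mem_insert.mp he with rfl | he'
        · exact hfe
        · have := hsub he'
          simp only [removeVerts, Finset.mem_filter] at this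
          exact this.1
      · intro e he g hg hne
        rcases Finset.mem_insert.mp he with rfl | he' <;>
          rcases Finset.mem_insert.mp hg with rfl | hg'
        · exact absurd rfl hne
        · exact (hdisjf g hg').symm
        · exact hdisjf e he'
        · exact hm e he' g hg' hne
      · push_neg
        exact ⟨f, Finset.mem_insert_self f M', hfu⟩
    · -- hj : j M ∈ sigma set
      intro M hM
      rw [Finset.mem_filter, mem_matchings] at hM
      obtain ⟨⟨hsub, hm⟩, hcov⟩ := hM
      push_neg at hcov
      obtain ⟨f₀, hf₀M, hf₀u⟩ := hcov
      have huniq : ∀ e ∈ M, u ∈ e → e = f₀ := by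
        intro e he heu
        by_contra hne
        exact Finset.disjoint_left.mp (hm e he f₀ hf₀M hne) heu hf₀u
      have hfilt : M.filter (fun e => u ∈ e) = {f₀} := by
        apply Finset.ext
        intro e
        simp only [Finset.mem_filter, Finset.mem_singleton]
        constructor
        · rintro ⟨he, heu⟩; exact huniq e he heu
        · rintro rfl; exact ⟨hf₀M, hf₀u⟩
      rw [Finset.mem_sigma]
      simp only [hfilt, Finset.sup_singleton]
      constructor
      · exact Finset.mem_filter.mpr ⟨hsub hf₀M, hf₀u⟩
      · rw [mem_matchings]
        constructor
        · intro e he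
          rw [Finset.mem_filter] at he
          simp only [removeVerts, Finset.mem_filter]
          refine ⟨hsub he.1, ?_⟩
          have hne : e ≠ f₀ := fun h => he.2 (h ▸ hf₀u)
          exact id (hm e he.1 f₀ hf₀M hne)
        · intro e he g hg hne
          rw [Finset.mem_filter] at he hg
          exact hm e he.1 g hg.1 hne
    · -- left inv : j (insert f M') = ⟨f, M'⟩
      rintro ⟨f, M'⟩ hp
      rw [Finset.mem_sigma, Finset.mem_filter, mem_matchings] at hp
      obtain ⟨⟨hfe, hfu⟩, hsub, hm⟩ := hp
      have hnotu : ∀ e ∈ M', u ∉ e := by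
        intro e he heu
        have := hsub he
        simp only [removeVerts, Finset.mem_filter] at this
        exact Finset.disjoint_left.mp this.2 heu hfu
      have h1 : (insert f M').filter (fun e => u ∈ e) = {f} := by
        apply Finset.ext
        intro e
        simp only [Finset.mem_filter, Finset.mem_insert, Finset.mem_singleton]
        constructor
        · rintro ⟨rfl | he, heu⟩
          · rfl
          · exact absurd heu (hnotu e he)
        · rintro rfl; exact ⟨Or.inl rfl, hfu⟩
      have h2 : (insert f M').filter (fun e => u ∉ e) = M' := by
        apply Finset.ext
        intro e
        simp only [Finset.mem_filter, Finset.mem_insert]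
        constructor
        · rintro ⟨rfl | he, heu⟩
          · exact absurd hfu heu
          · exact he
        · intro he; exact ⟨Or.inr he, hnotu e he⟩
      simp only [h1, h2, Finset.sup_singleton]
      rfl
    · -- right inv : insert (j M).1 (j M).2 = M
      intro M hM
      rw [Finset.mem_filter, mem_matchings] at hM
      obtain ⟨⟨hsub, hm⟩, hcov⟩ := hM
      push_neg at hcov
      obtain ⟨f₀, hf₀M, hf₀u⟩ := hcov
      have huniq : ∀ e ∈ M, u ∈ e → e = f₀ := by
        intro e he heu
        by_contra hne
        exact Finset.disjoint_left.mp (hm e he f₀ hf₀M hne) heu hf₀u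
      have hfilt : M.filter (fun e => u ∈ e) = {f₀} := by
        apply Finset.ext
        intro e
        simp only [Finset.mem_filter, Finset.mem_singleton]
        constructor
        · rintro ⟨he, heu⟩; exact huniq e he heu
        · rintro rfl; exact ⟨hf₀M, hf₀u⟩
      simp only [hfilt, Finset.sup_singleton]
      apply Finset.ext
      intro e
      simp only [Finset.mem_insert, Finset.mem_filter]
      constructor
      · rintro (rfl | ⟨he, -⟩)
        · exact hf₀M
        · exact he
      · intro he
        by_cases heu : u ∈ e
        · exact Or.inl (huniq e he heu)
        · exact Or.inr ⟨he, heu⟩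
    · -- terms equal
      rintro ⟨f, M'⟩ hp
      rw [Finset.mem_sigma, Finset.mem_filter, mem_matchings] at hp
      obtain ⟨⟨hfe, hfu⟩, hsub, hm⟩ := hp
      have hfM' : f ∉ M' := by
        intro hmem
        have h' := hsub hmem
        simp only [removeVerts, Finset.mem_filter] at h'
        have hfempty : f = ∅ := by simpa using disjoint_self.mp h'.2
        have hcf := hun f hfe
        rw [hfempty, Finset.card_empty] at hcf
        omega
      have hcard : (insert f M').card = M'.card + 1 := Finset.card_insert_of_notMem hfM'
      have hcardf : (G.removeVerts f).verts.card = G.verts.card - r := by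
        simp only [removeVerts]
        rw [Finset.card_sdiff_of_subset (hwf f hfe), hun f hfe]
      have hle := matching_mul_card_le (removeVerts_wellFormed hwf f)
        (removeVerts_uniform hun f) (mem_matchings.mpr ⟨hsub, hm⟩)
      rw [hcardf] at hle
      have hrn : r ≤ G.verts.card := by
        have := Finset.card_le_card (hwf f hfe)
        rw [hun f hfe] at this
        exact this
      have hexp : G.verts.card - r * (M'.card + 1) = (G.verts.card - r) - r * M'.card := by
        have : r * (M'.card + 1) = r * M'.card + r := by ring
        omega
      simp only
      rw [hcard, hcardf, hexp, pow_succ]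
      ring
  rw [hpart1, hpart2, Finset.sum_neg_distrib]
  ring


section Map

variable {β : Type*}

lemma image_eq_image_of_injOn {f : α → β} {V : Finset α} (hinj : Set.InjOn f ↑V)
    {s t : Finset α} (hs : s ⊆ V) (ht : t ⊆ V) (h : s.image f = t.image f) : s = t := by
  apply Finset.ext
  intro a
  constructor
  · intro ha
    have : f a ∈ t.image f := h ▸ Finset.mem_image_of_mem f ha
    obtain ⟨b, hb, hba⟩ := Finset.mem_image.mp this
    rwa [← hinj (ht hb) (hs ha) hba]
  · intro ha
    have : f a ∈ s.image f := h ▸ Finset.mem_image_of_mem f ha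
    obtain ⟨b, hb, hba⟩ := Finset.mem_image.mp this
    rwa [← hinj (hs hb) (ht ha) hba]

lemma disjoint_image_of_injOn {f : α → β} {V : Finset α} (hinj : Set.InjOn f ↑V)
    {s t : Finset α} (hs : s ⊆ V) (ht : t ⊆ V) (h : Disjoint s t) :
    Disjoint (s.image f) (t.image f) := by
  rw [Finset.disjoint_left]
  intro b hbs hbt
  obtain ⟨a, ha, rfl⟩ := Finset.mem_image.mp hbs
  obtain ⟨a', ha', ha'eq⟩ := Finset.mem_image.mp hbt
  rw [hinj (ht ha') (hs ha) ha'eq] at ha'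
  exact Finset.disjoint_left.mp h ha ha'

lemma disjoint_of_image_disjoint {f : α → β} {s t : Finset α}
    (h : Disjoint (s.image f) (t.image f)) : Disjoint s t := by
  rw [Finset.disjoint_left]
  intro a has hat
  exact Finset.disjoint_left.mp h (Finset.mem_image_of_mem f has)
    (Finset.mem_image_of_mem f hat)

/-- Invariance of the matching count under injective relabeling. -/
lemma matchCount_map (f : α → β) (G : FinHypergraph α) (G' : FinHypergraph β)
    (hwf : G.WellFormed) (hinj : Set.InjOn f ↑G.verts)
    (hv : G'.verts = G.verts.image f)
    (he : G'.edges = G.edges.image (Finset.image f)) (k : ℕ) :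
    G'.matchCount k = G.matchCount k := by
  have hedge_inj : ∀ e ∈ G.edges, ∀ e' ∈ G.edges, e.image f = e'.image f → e = e' :=
    fun e hee e' he' h => image_eq_image_of_injOn hinj (hwf e hee) (hwf e' he') h
  rw [matchCount, matchCount]
  refine (Finset.card_bij (fun M _ => M.image (Finset.image f)) ?_ ?_ ?_).symm
  · -- maps to
    intro M hM
    rw [Finset.mem_filter, Finset.mem_powerset] at hM
    obtain ⟨hsub, hcard, hmatch⟩ := hM
    have hinjM : ∀ e ∈ M, ∀ e' ∈ M, e.image f = e'.image f → e = e' :=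
      fun e hee e' he' h => hedge_inj e (hsub hee) e' (hsub he') h
    rw [Finset.mem_filter, Finset.mem_powerset]
    refine ⟨?_, ?_, ?_⟩
    · rw [he]
      exact Finset.image_subset_image hsub
    · rw [Finset.card_image_of_injOn (fun e hee e' he' h => hinjM e hee e' he' h), hcard]
    · intro e' he' g' hg' hne
      obtain ⟨e, hee, rfl⟩ := Finset.mem_image.mp he'
      obtain ⟨g, hg, rfl⟩ := Finset.mem_image.mp hg'
      have hneg : e ≠ g := fun h => hne (h ▸ rfl)
      exact disjoint_image_of_injOn hinj (hwf e (hsub hee)) (hwf g (hsub hg))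
        (hmatch e hee g hg hneg)
  · -- injective
    intro M₁ hM₁ M₂ hM₂ h
    replace h : M₁.image (Finset.image f) = M₂.image (Finset.image f) := h
    rw [Finset.mem_filter, Finset.mem_powerset] at hM₁ hM₂
    apply Finset.ext
    intro e
    constructor
    · intro hee
      have : e.image f ∈ M₂.image (Finset.image f) := h ▸ Finset.mem_image_of_mem _ hee
      obtain ⟨e₂, he₂, he₂eq⟩ := Finset.mem_image.mp this
      rwa [← hedge_inj e₂ (hM₂.1 he₂) e (hM₁.1 hee) he₂eq]
    · intro hee
      have : e.image f ∈ M₁.image (Finset.image f) := h ▸ Finset.mem_image_of_mem _ hee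
      obtain ⟨e₁, he₁, he₁eq⟩ := Finset.mem_image.mp this
      rwa [← hedge_inj e₁ (hM₁.1 he₁) e (hM₂.1 hee) he₁eq]
  · -- surjective
    intro N hN
    rw [Finset.mem_filter, Finset.mem_powerset] at hN
    obtain ⟨hsub, hcard, hmatch⟩ := hN
    refine ⟨G.edges.filter (fun e => e.image f ∈ N), ?_, ?_⟩
    · rw [Finset.mem_filter, Finset.mem_powerset]
      have himg : (G.edges.filter (fun e => e.image f ∈ N)).image (Finset.image f) = N := by
        apply Finset.ext
        intro n
        simp only [Finset.mem_image, Finset.mem_filter]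
        constructor
        · rintro ⟨e, ⟨-, hN'⟩, rfl⟩
          exact hN'
        · intro hn
          have := hsub hn
          rw [he, Finset.mem_image] at this
          obtain ⟨e, hee, rfl⟩ := this
          exact ⟨e, ⟨hee, hn⟩, rfl⟩
      have hfin : ∀ e ∈ G.edges.filter (fun e => e.image f ∈ N),
          ∀ e' ∈ G.edges.filter (fun e => e.image f ∈ N), e.image f = e'.image f → e = e' :=
        fun e hee e' he' h => hedge_inj e (Finset.mem_filter.mp hee).1
          e' (Finset.mem_filter.mp he').1 h
      refine ⟨Finset.filter_subset _ _, ?_, ?_⟩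
      · have h1 : ((G.edges.filter (fun e => e.image f ∈ N)).image (Finset.image f)).card
            = (G.edges.filter (fun e => e.image f ∈ N)).card :=
          Finset.card_image_of_injOn (fun e hee e' he' h => hfin e hee e' he' h)
        rw [← h1, himg, hcard]
      · intro e hee g hg hne
        rw [Finset.mem_filter] at hee hg
        have hneimg : e.image f ≠ g.image f := fun h => hne (hedge_inj e hee.1 g hg.1 h)
        exact disjoint_of_image_disjoint (hmatch _ hee.2 _ hg.2 hneimg)
    · apply Finset.ext
      intro n
      simp only [Finset.mem_image, Finset.mem_filter]
      constructor
      · rintro ⟨e, ⟨-, hN'⟩, rfl⟩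
        exact hN'
      · intro hn
        have := hsub hn
        rw [he, Finset.mem_image] at this
        obtain ⟨e, hee, rfl⟩ := this
        exact ⟨e, ⟨hee, hn⟩, rfl⟩

/-- Invariance of the matching polynomial under injective relabeling. -/
lemma matchPoly_map (f : α → β) (G : FinHypergraph α) (G' : FinHypergraph β)
    (hwf : G.WellFormed) (hinj : Set.InjOn f ↑G.verts)
    (hv : G'.verts = G.verts.image f)
    (he : G'.edges = G.edges.image (Finset.image f)) (r : ℕ) (x : ℝ) :
    G'.matchPoly r x = G.matchPoly r x := by
  have hcard : G'.verts.card = G.verts.card := by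
    rw [hv, Finset.card_image_of_injOn hinj]
  rw [matchPoly, matchPoly, hcard]
  refine Finset.sum_congr rfl (fun k _ => ?_)
  rw [matchCount_map f G G' hwf hinj hv he k]

end Map



-- ==================== paths ====================

def mkPath (r m : ℕ) (w : ℕ → α) : FinHypergraph α :=
  ⟨(Finset.Icc 0 (m * (r - 1))).image w, loosePathEdges r m w⟩

noncomputable def pathPoly (r m : ℕ) (x : ℝ) : ℝ := (mkPath r m (id : ℕ → ℕ)).matchPoly r x

lemma mkPath_wellFormed (r m : ℕ) (w : ℕ → α) : (mkPath r m w).WellFormed := by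
  intro e he
  simp only [mkPath, loosePathEdges, Finset.mem_image] at he
  obtain ⟨i, hi, rfl⟩ := he
  rw [Finset.mem_range] at hi
  apply Finset.image_subset_image
  intro t ht
  rw [Finset.mem_Icc] at ht ⊢
  exact ⟨Nat.zero_le t, ht.2.trans (Nat.mul_le_mul_right _ hi)⟩

lemma mkPath_uniform (r m : ℕ) (hr : 1 ≤ r) (w : ℕ → α)
    (hinj : Set.InjOn w (Set.Iic (m * (r - 1)))) : (mkPath r m w).Uniform r := by
  intro e he
  simp only [mkPath, loosePathEdges, Finset.mem_image] at he
  obtain ⟨i, hi, rfl⟩ := he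
  rw [Finset.mem_range] at hi
  have hsub : ∀ t ∈ Finset.Icc (i * (r - 1)) ((i + 1) * (r - 1)), t ≤ m * (r - 1) := by
    intro t ht
    rw [Finset.mem_Icc] at ht
    exact ht.2.trans (Nat.mul_le_mul_right _ hi)
  rw [Finset.card_image_of_injOn (fun a ha b hb hab => hinj (hsub a ha) (hsub b hb) hab)]
  rw [Nat.card_Icc]
  have : (i + 1) * (r - 1) = i * (r - 1) + (r - 1) := by ring
  omega

lemma mem_image_label {w : ℕ → α} {N : ℕ} (hinj : Set.InjOn w (Set.Iic N)) {s : Finset ℕ}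
    (hs : ∀ t ∈ s, t ≤ N) {c : ℕ} (hc : c ≤ N) : w c ∈ s.image w ↔ c ∈ s := by
  constructor
  · intro h
    obtain ⟨t, ht, hteq⟩ := Finset.mem_image.mp h
    rwa [← hinj (hs t ht) hc hteq]
  · exact fun h => Finset.mem_image_of_mem w h

lemma image_sdiff_label {w : ℕ → α} {N : ℕ} (hinj : Set.InjOn w (Set.Iic N))
    {s : Finset ℕ} (hs : ∀ t ∈ s, t ≤ N) {c : ℕ} (hc : c ≤ N) :
    s.image w \ {w c} = (s.erase c).image w := by
  apply Finset.ext
  intro a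
  constructor
  · intro ha
    rw [Finset.mem_sdiff, Finset.mem_singleton] at ha
    obtain ⟨t, ht, rfl⟩ := Finset.mem_image.mp ha.1
    exact Finset.mem_image_of_mem w
      (Finset.mem_erase.mpr ⟨fun h => ha.2 (by rw [h]), ht⟩)
  · intro ha
    obtain ⟨t, ht, rfl⟩ := Finset.mem_image.mp ha
    rw [Finset.mem_erase] at ht
    rw [Finset.mem_sdiff, Finset.mem_singleton]
    exact ⟨Finset.mem_image_of_mem w ht.2,
      fun h => ht.1 (hinj (hs t ht.2) hc h)⟩

lemma matchPoly_mkPath (r m : ℕ) (w : ℕ → α) (hinj : Set.InjOn w (Set.Iic (m * (r - 1))))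
    (x : ℝ) : (mkPath r m w).matchPoly r x = pathPoly r m x := by
  rw [pathPoly]
  have hverts : (mkPath r m (id : ℕ → ℕ)).verts = Finset.Icc 0 (m * (r - 1)) := by
    simp [mkPath]
  refine matchPoly_map w (mkPath r m (id : ℕ → ℕ)) (mkPath r m w)
    (mkPath_wellFormed r m id) ?_ ?_ ?_ r x
  · intro a ha b hb hab
    rw [hverts, Finset.coe_Icc] at ha hb
    exact hinj (Set.mem_Iic.mpr ha.2) (Set.mem_Iic.mpr hb.2) hab
  · rw [hverts]
    simp [mkPath]
  · simp only [mkPath, loosePathEdges, Finset.image_image]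
    exact Finset.image_congr (fun i _ => by simp)

lemma image_shift (w : ℕ → α) (a p q : ℕ) :
    (Finset.Icc p q).image (fun t => w (a + t)) = (Finset.Icc (a + p) (a + q)).image w := by
  apply Finset.ext
  intro b
  simp only [Finset.mem_image, Finset.mem_Icc]
  constructor
  · rintro ⟨t, ⟨h1, h2⟩, rfl⟩
    exact ⟨a + t, ⟨by omega, by omega⟩, rfl⟩
  · rintro ⟨t, ⟨h1, h2⟩, rfl⟩
    refine ⟨t - a, ⟨by omega, by omega⟩, ?_⟩
    congr 1
    omega

lemma matchPoly_shiftPath (r : ℕ) (hr : 1 ≤ r) (w : ℕ → α) (N : ℕ)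
    (hinj : Set.InjOn w (Set.Iic N)) (a m : ℕ) (hle : a + m * (r - 1) ≤ N) (x : ℝ) :
    (FinHypergraph.mk ((Finset.Icc a (a + m * (r - 1))).image w)
       ((Finset.range m).image
         (fun i => (Finset.Icc (a + i * (r - 1)) (a + (i + 1) * (r - 1))).image w))).matchPoly r x
      = pathPoly r m x := by
  have hinj' : Set.InjOn (fun t => w (a + t)) (Set.Iic (m * (r - 1))) := by
    intro s hs t ht hst
    rw [Set.mem_Iic] at hs ht
    have := hinj (Set.mem_Iic.mpr (by omega : a + s ≤ N))
      (Set.mem_Iic.mpr (by omega : a + t ≤ N)) hst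
    omega
  have hEq : mkPath r m (fun t => w (a + t))
      = FinHypergraph.mk ((Finset.Icc a (a + m * (r - 1))).image w)
         ((Finset.range m).image
           (fun i => (Finset.Icc (a + i * (r - 1)) (a + (i + 1) * (r - 1))).image w)) := by
    simp only [mkPath, loosePathEdges, FinHypergraph.mk.injEq]
    constructor
    · rw [image_shift, Nat.add_zero]
    · apply Finset.image_congr
      intro i _
      simp only
      rw [image_shift]
  rw [← hEq, matchPoly_mkPath r m _ hinj']


lemma matchPoly_mkPath_remove (r d : ℕ) (hr : 3 ≤ r) (w : ℕ → α)
    (hinj : Set.InjOn w (Set.Iic (d * (r - 1)))) (c₀ l h : ℕ)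
    (hc1 : l * (r - 1) < c₀) (hc2 : c₀ < h * (r - 1)) (hhd : h ≤ d)
    (hcont : ∀ j, j < d →
      (c₀ ∈ Finset.Icc (j * (r - 1)) ((j + 1) * (r - 1)) ↔ l ≤ j ∧ j < h))
    (x : ℝ) :
    ((mkPath r d w).removeVerts {w c₀}).matchPoly r x
      = x ^ ((h - l) * (r - 1) - 2) * (pathPoly r l x * pathPoly r (d - h) x) := by
  have hr1 : 1 ≤ r := by omega
  have hrr : 2 ≤ r - 1 := by omega
  have hbD : h * (r - 1) ≤ d * (r - 1) := Nat.mul_le_mul_right _ hhd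
  have hlh : l < h := by
    rcases Nat.lt_or_ge l h with h' | h'
    · exact h'
    · exfalso
      have := Nat.mul_le_mul_right (r - 1) h'
      omega
  have hld : l ≤ d := by omega
  have haD : l * (r - 1) ≤ d * (r - 1) := Nat.mul_le_mul_right _ hld
  have hsub2 : (h - l) * (r - 1) = h * (r - 1) - l * (r - 1) := Nat.sub_mul h l (r - 1)
  have hab2 : l * (r - 1) + 2 ≤ h * (r - 1) := by
    have h1 : l + 1 ≤ h := hlh
    have := Nat.mul_le_mul_right (r - 1) h1
    have h2 : (l + 1) * (r - 1) = l * (r - 1) + (r - 1) := by ring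
    omega
  have hc₀D : c₀ ≤ d * (r - 1) := by omega
  have hDsum : h * (r - 1) + (d - h) * (r - 1) = d * (r - 1) := by
    rw [Nat.sub_mul]
    omega
  have hinjV : Set.InjOn w ↑(Finset.Icc 0 (d * (r - 1))) := by
    intro s hs t ht hst
    rw [Finset.coe_Icc, Set.mem_Icc] at hs ht
    exact hinj (Set.mem_Iic.mpr hs.2) (Set.mem_Iic.mpr ht.2) hst
  -- the three pieces
  set L : FinHypergraph α := mkPath r l w with hL
  set Mid : FinHypergraph α :=
    ⟨((Finset.Icc (l * (r - 1) + 1) (h * (r - 1) - 1)).erase c₀).image w, ∅⟩ with hMid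
  set R : FinHypergraph α :=
    ⟨(Finset.Icc (h * (r - 1)) (h * (r - 1) + (d - h) * (r - 1))).image w,
     (Finset.range (d - h)).image
       (fun i => (Finset.Icc (h * (r - 1) + i * (r - 1))
          (h * (r - 1) + (i + 1) * (r - 1))).image w)⟩ with hR
  set MR : FinHypergraph α := ⟨Mid.verts ∪ R.verts, R.edges⟩ with hMR
  -- well-formedness and uniformity
  have hLwf : L.WellFormed := mkPath_wellFormed r l w
  have hLun : L.Uniform r := mkPath_uniform r l hr1 w
    (fun s hs t ht hst => hinj (Set.mem_Iic.mpr (le_trans hs haD))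
      (Set.mem_Iic.mpr (le_trans ht haD)) hst)
  have hRlab : ∀ i, i < d - h → ∀ t ∈ Finset.Icc (h * (r - 1) + i * (r - 1))
      (h * (r - 1) + (i + 1) * (r - 1)), t ≤ d * (r - 1) := by
    intro i hi t ht
    rw [Finset.mem_Icc] at ht
    have h1 : h * (r - 1) + (i + 1) * (r - 1) = (h + i + 1) * (r - 1) := by ring
    have h2 : (h + i + 1) * (r - 1) ≤ d * (r - 1) := Nat.mul_le_mul_right _ (by omega)
    omega
  have hRwf : R.WellFormed := by
    intro e he
    simp only [hR, Finset.mem_image] at he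
    obtain ⟨i, hi, rfl⟩ := he
    rw [Finset.mem_range] at hi
    apply Finset.image_subset_image
    intro t ht
    have := hRlab i hi t ht
    rw [Finset.mem_Icc] at ht ⊢
    omega
  have hRun : R.Uniform r := by
    intro e he
    simp only [hR, Finset.mem_image] at he
    obtain ⟨i, hi, rfl⟩ := he
    rw [Finset.mem_range] at hi
    rw [Finset.card_image_of_injOn (fun s hs t ht hst =>
      hinj (Set.mem_Iic.mpr (hRlab i hi s hs)) (Set.mem_Iic.mpr (hRlab i hi t ht)) hst)]
    rw [Nat.card_Icc]
    have : h * (r - 1) + (i + 1) * (r - 1) = h * (r - 1) + i * (r - 1) + (r - 1) := by ring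
    omega
  have hMidwf : Mid.WellFormed := by
    intro e he
    simp only [hMid, Finset.notMem_empty] at he
  have hMidun : Mid.Uniform r := by
    intro e he
    simp only [hMid, Finset.notMem_empty] at he
  have hMRwf : MR.WellFormed := by
    intro e he
    exact (hRwf e he).trans Finset.subset_union_right
  have hMRun : MR.Uniform r := hRun
  -- label sets
  have hSL : ∀ t ∈ Finset.Icc 0 (l * (r - 1)), t ≤ d * (r - 1) := by
    intro t ht
    rw [Finset.mem_Icc] at ht
    omega
  have hSM : ∀ t ∈ (Finset.Icc (l * (r - 1) + 1) (h * (r - 1) - 1)).erase c₀,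
      t ≤ d * (r - 1) := by
    intro t ht
    rw [Finset.mem_erase, Finset.mem_Icc] at ht
    omega
  have hSR : ∀ t ∈ Finset.Icc (h * (r - 1)) (h * (r - 1) + (d - h) * (r - 1)),
      t ≤ d * (r - 1) := by
    intro t ht
    rw [Finset.mem_Icc] at ht
    omega
  -- vertex disjointness
  have hdisjLMR : Disjoint L.verts MR.verts := by
    rw [hL, hMR]
    simp only [hMid, hR, mkPath]
    rw [← Finset.image_union]
    refine disjoint_image_of_injOn hinjV ?_ ?_ ?_
    · intro t ht
      rw [Finset.mem_Icc] at ht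
      rw [Finset.mem_Icc]
      omega
    · intro t ht
      rw [Finset.mem_union, Finset.mem_erase, Finset.mem_Icc, Finset.mem_Icc] at ht
      rw [Finset.mem_Icc]
      rcases ht with ⟨-, h1, h2⟩ | ⟨h1, h2⟩ <;> omega
    · rw [Finset.disjoint_left]
      intro t ht1 ht2
      rw [Finset.mem_Icc] at ht1
      rw [Finset.mem_union, Finset.mem_erase, Finset.mem_Icc, Finset.mem_Icc] at ht2
      rcases ht2 with ⟨-, h1, h2⟩ | ⟨h1, h2⟩ <;> omega
  have hdisjMidR : Disjoint Mid.verts R.verts := by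
    rw [hMid, hR]
    refine disjoint_image_of_injOn hinjV ?_ ?_ ?_
    · intro t ht
      have := hSM t ht
      rw [Finset.mem_Icc]
      omega
    · intro t ht
      have := hSR t ht
      rw [Finset.mem_Icc]
      omega
    · rw [Finset.disjoint_left]
      intro t ht1 ht2
      rw [Finset.mem_erase, Finset.mem_Icc] at ht1
      rw [Finset.mem_Icc] at ht2
      omega
  -- vertex decomposition
  have hv : ((mkPath r d w).removeVerts {w c₀}).verts = L.verts ∪ MR.verts := by
    show ((Finset.Icc 0 (d * (r - 1))).image w) \ {w c₀} = _
    rw [image_sdiff_label hinj (fun t ht => by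
        rw [Finset.mem_Icc] at ht; exact ht.2) hc₀D]
    have hlabels : (Finset.Icc 0 (d * (r - 1))).erase c₀
        = Finset.Icc 0 (l * (r - 1))
          ∪ ((Finset.Icc (l * (r - 1) + 1) (h * (r - 1) - 1)).erase c₀
             ∪ Finset.Icc (h * (r - 1)) (h * (r - 1) + (d - h) * (r - 1))) := by
      apply Finset.ext
      intro t
      simp only [Finset.mem_erase, Finset.mem_Icc, Finset.mem_union]
      omega
    rw [hlabels, Finset.image_union, Finset.image_union]
    rfl
  -- edge decomposition
  have he : ((mkPath r d w).removeVerts {w c₀}).edges = L.edges ∪ MR.edges := by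
    show (loosePathEdges r d w).filter (fun e => Disjoint e {w c₀}) = _
    rw [loosePathEdges]
    rw [Finset.filter_image]
    have hfil : (Finset.range d).filter
        (fun i => Disjoint ((Finset.Icc (i * (r - 1)) ((i + 1) * (r - 1))).image w) {w c₀})
        = (Finset.range d).filter (fun j => ¬ (l ≤ j ∧ j < h)) := by
      apply Finset.filter_congr
      intro j hj
      rw [Finset.mem_range] at hj
      simp only [Finset.disjoint_singleton_right]
      rw [mem_image_label hinj (fun t ht => by
          rw [Finset.mem_Icc] at ht
          exact ht.2.trans (Nat.mul_le_mul_right _ hj)) hc₀D]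
      rw [hcont j hj]
    rw [hfil]
    have hset : (Finset.range d).filter (fun j => ¬ (l ≤ j ∧ j < h))
        = Finset.range l ∪ (Finset.range (d - h)).image (fun i => h + i) := by
      apply Finset.ext
      intro j
      simp only [Finset.mem_filter, Finset.mem_range, Finset.mem_union, Finset.mem_image]
      constructor
      · rintro ⟨hjd, hnot⟩
        rcases Nat.lt_or_ge j l with h' | h'
        · exact Or.inl h'
        · right
          refine ⟨j - h, by omega, by omega⟩
      · rintro (h' | ⟨i, hi, rfl⟩)
        · exact ⟨by omega, by omega⟩
        · exact ⟨by omega, by omega⟩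
    rw [hset, Finset.image_union, Finset.image_image]
    congr 1
    apply Finset.image_congr
    intro i _
    simp only [Function.comp_apply]
    congr 2 <;> ring
  -- assemble
  rw [matchPoly_mul hr1 _ L MR hv hdisjLMR he hLwf hMRwf hLun hMRun x]
  rw [matchPoly_mul hr1 MR Mid R (by rw [hMR]) hdisjMidR
    (by rw [hMR, hMid]; exact (Finset.empty_union _).symm)
    hMidwf hRwf hMidun hRun x]
  have hLpoly : L.matchPoly r x = pathPoly r l x :=
    matchPoly_mkPath r l w (fun s hs t ht hst => hinj (Set.mem_Iic.mpr (le_trans hs haD))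
      (Set.mem_Iic.mpr (le_trans ht haD)) hst) x
  have hMidpoly : Mid.matchPoly r x = x ^ ((h - l) * (r - 1) - 2) := by
    rw [matchPoly_edgeless rfl r hr1 x]
    congr 1
    show (((Finset.Icc (l * (r - 1) + 1) (h * (r - 1) - 1)).erase c₀).image w).card = _
    rw [Finset.card_image_of_injOn (fun s hs t ht hst =>
      hinj (Set.mem_Iic.mpr (hSM s hs)) (Set.mem_Iic.mpr (hSM t ht)) hst)]
    rw [Finset.card_erase_of_mem (by rw [Finset.mem_Icc]; omega), Nat.card_Icc]
    omega
  have hRpoly : R.matchPoly r x = pathPoly r (d - h) x :=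
    matchPoly_shiftPath r hr1 w (d * (r - 1)) hinj (h * (r - 1)) (d - h) (by omega) x
  rw [hLpoly, hMidpoly, hRpoly]
  ring


lemma matchPoly_identify (r d c : ℕ) (hr : 3 ≤ r) (H : FinHypergraph α)
    (hwf : H.WellFormed) (hun : H.Uniform r) (u : α) (hu : u ∈ H.verts)
    (hc : c ≤ d * (r - 1)) (w : ℕ → α) (hinj : Set.InjOn w (Set.Iic (d * (r - 1))))
    (hwc : w c = u) (hnew : ∀ t, t ≤ d * (r - 1) → t ≠ c → w t ∉ H.verts)
    (T : FinHypergraph α)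
    (hTv : T.verts = H.verts ∪ (Finset.Icc 0 (d * (r - 1))).image w)
    (hTe : T.edges = H.edges ∪ loosePathEdges r d w) (x : ℝ) :
    T.matchPoly r x
      = (H.removeVerts {u}).matchPoly r x * pathPoly r d x
        - (∑ f ∈ H.edges.filter (fun f => u ∈ f), (H.removeVerts f).matchPoly r x)
          * ((mkPath r d w).removeVerts {w c}).matchPoly r x := by
  have hr1 : 1 ≤ r := by omega
  set P : FinHypergraph α := mkPath r d w with hP
  have hPwf : P.WellFormed := mkPath_wellFormed r d w
  have hPun : P.Uniform r := mkPath_uniform r d hr1 w hinj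
  have hPv : P.verts = (Finset.Icc 0 (d * (r - 1))).image w := rfl
  have hPe : P.edges = loosePathEdges r d w := rfl
  have hedge_lab : ∀ e ∈ loosePathEdges r d w, ∃ j, j < d ∧
      e = (Finset.Icc (j * (r - 1)) ((j + 1) * (r - 1))).image w := by
    intro e he
    rw [loosePathEdges, Finset.mem_image] at he
    obtain ⟨j, hj, rfl⟩ := he
    exact ⟨j, Finset.mem_range.mp hj, rfl⟩
  have hmeet : ∀ a, a ∈ H.verts → a ∈ P.verts → a = u := by
    intro a haH haP
    rw [hPv, Finset.mem_image] at haP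
    obtain ⟨t, ht, rfl⟩ := haP
    rw [Finset.mem_Icc] at ht
    by_cases htc : t = c
    · rw [htc, hwc]
    · exact absurd haH (hnew t ht.2 htc)
  have huP : u ∈ P.verts := by
    rw [hPv, ← hwc]
    exact Finset.mem_image_of_mem w (Finset.mem_Icc.mpr ⟨Nat.zero_le c, hc⟩)
  have hpath_notH : ∀ e ∈ loosePathEdges r d w, e ∉ H.edges := by
    intro e he heH
    obtain ⟨j, hjd, rfl⟩ := hedge_lab e he
    have hcard : (Finset.Icc (j * (r - 1)) ((j + 1) * (r - 1))).card = r := by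
      rw [Nat.card_Icc]
      have : (j + 1) * (r - 1) = j * (r - 1) + (r - 1) := by ring
      omega
    have h1lt : 1 < (Finset.Icc (j * (r - 1)) ((j + 1) * (r - 1))).card := by omega
    obtain ⟨t, ht, htc⟩ := Finset.exists_mem_ne h1lt c
    have htD : t ≤ d * (r - 1) := by
      rw [Finset.mem_Icc] at ht
      exact ht.2.trans (Nat.mul_le_mul_right _ hjd)
    exact hnew t htD htc (hwf _ heH (Finset.mem_image_of_mem w ht))
  have hpath_sub : ∀ e ∈ loosePathEdges r d w, e ⊆ P.verts := fun e he => hPwf e he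
  have hcross : ∀ f ∈ H.edges, ∀ g ∈ loosePathEdges r d w, ∀ a, a ∈ f → a ∈ g → a = u := by
    intro f hf g hg a haf hag
    exact hmeet a (hwf f hf haf) (hpath_sub g hg hag)
  have huT : u ∈ T.verts := by
    rw [hTv]
    exact Finset.mem_union_left _ hu
  have hTwf : T.WellFormed := wellFormed_union hTv hTe hwf hPwf
  have hTun : T.Uniform r := uniform_union hTe hun hPun
  rw [matchPoly_delete hr1 T hTwf hTun u huT x]
  -- (a) T - u
  have hTu : (T.removeVerts {u}).matchPoly r x
      = (H.removeVerts {u}).matchPoly r x * (P.removeVerts {w c}).matchPoly r x := by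
    refine matchPoly_mul hr1 _ _ _ ?_ ?_ ?_ (removeVerts_wellFormed hwf _)
      (removeVerts_wellFormed hPwf _) (removeVerts_uniform hun _)
      (removeVerts_uniform hPun _) x
    · show T.verts \ {u} = H.verts \ {u} ∪ P.verts \ {w c}
      rw [hTv, hwc, Finset.union_sdiff_distrib, hPv]
    · rw [Finset.disjoint_left]
      intro a ha1 ha2
      simp only [removeVerts, Finset.mem_sdiff, Finset.mem_singleton] at ha1 ha2
      rw [hwc] at ha2
      exact ha1.2 (hmeet a ha1.1 ha2.1)
    · show T.edges.filter (fun e => Disjoint e {u})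
        = H.edges.filter (fun e => Disjoint e {u}) ∪ P.edges.filter (fun e => Disjoint e {w c})
      rw [hwc, hTe, Finset.filter_union, hPe]
  -- (b) T - V(f) for f an H-edge through u
  have hTf : ∀ f ∈ H.edges.filter (fun f => u ∈ f), (T.removeVerts f).matchPoly r x
      = (H.removeVerts f).matchPoly r x * (P.removeVerts {w c}).matchPoly r x := by
    intro f hf
    rw [Finset.mem_filter] at hf
    obtain ⟨hfH, hfu⟩ := hf
    refine matchPoly_mul hr1 _ _ _ ?_ ?_ ?_ (removeVerts_wellFormed hwf _)
      (removeVerts_wellFormed hPwf _) (removeVerts_uniform hun _)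
      (removeVerts_uniform hPun _) x
    · show T.verts \ f = H.verts \ f ∪ P.verts \ {w c}
      rw [hTv, hwc]
      apply Finset.ext
      intro a
      simp only [Finset.mem_sdiff, Finset.mem_union, Finset.mem_singleton]
      constructor
      · rintro ⟨haH | haP, hanf⟩
        · exact Or.inl ⟨haH, hanf⟩
        · refine Or.inr ⟨haP, fun hau => hanf ?_⟩
          rw [hau]
          exact hfu
      · rintro (⟨haH, hanf⟩ | ⟨haP, hane⟩)
        · exact ⟨Or.inl haH, hanf⟩
        · exact ⟨Or.inr haP, fun haf => hane (hmeet a (hwf f hfH haf) haP)⟩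
    · rw [Finset.disjoint_left]
      intro a ha1 ha2
      simp only [removeVerts, Finset.mem_sdiff, Finset.mem_singleton] at ha1 ha2
      rw [hwc] at ha2
      have : a = u := hmeet a (ha1.1) ha2.1
      rw [this] at ha1
      exact ha1.2 hfu
    · show T.edges.filter (fun e => Disjoint e f)
        = H.edges.filter (fun e => Disjoint e f) ∪ P.edges.filter (fun e => Disjoint e {w c})
      rw [hTe, Finset.filter_union, hPe]
      congr 1
      apply Finset.filter_congr
      intro g hg
      rw [Finset.disjoint_singleton_right, hwc]
      constructor
      · intro hdis hug
        exact Finset.disjoint_left.mp hdis hug hfu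
      · intro hug
        rw [Finset.disjoint_left]
        intro a hag haf
        exact hug ((hcross f hfH g hg a haf hag) ▸ hag)
  -- (c) T - V(g) for g a path edge through u
  have hTg : ∀ g ∈ (loosePathEdges r d w).filter (fun g => u ∈ g),
      (T.removeVerts g).matchPoly r x
      = (H.removeVerts {u}).matchPoly r x * (P.removeVerts g).matchPoly r x := by
    intro g hg
    rw [Finset.mem_filter] at hg
    obtain ⟨hgP, hgu⟩ := hg
    refine matchPoly_mul hr1 _ _ _ ?_ ?_ ?_ (removeVerts_wellFormed hwf _)
      (removeVerts_wellFormed hPwf _) (removeVerts_uniform hun _)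
      (removeVerts_uniform hPun _) x
    · show T.verts \ g = H.verts \ {u} ∪ P.verts \ g
      rw [hTv]
      apply Finset.ext
      intro a
      simp only [Finset.mem_sdiff, Finset.mem_union, Finset.mem_singleton]
      constructor
      · rintro ⟨haH | haP, hang⟩
        · refine Or.inl ⟨haH, fun hau => hang ?_⟩
          rw [hau]
          exact hgu
        · exact Or.inr ⟨haP, hang⟩
      · rintro (⟨haH, hane⟩ | ⟨haP, hang⟩)
        · exact ⟨Or.inl haH, fun hag => hane (hmeet a haH (hpath_sub g hgP hag))⟩
        · exact ⟨Or.inr haP, hang⟩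
    · rw [Finset.disjoint_left]
      intro a ha1 ha2
      simp only [removeVerts, Finset.mem_sdiff, Finset.mem_singleton] at ha1 ha2
      have : a = u := hmeet a ha1.1 ha2.1
      exact ha1.2 this
    · show T.edges.filter (fun e => Disjoint e g)
        = H.edges.filter (fun e => Disjoint e {u}) ∪ P.edges.filter (fun e => Disjoint e g)
      rw [hTe, Finset.filter_union, hPe]
      congr 1
      apply Finset.filter_congr
      intro f hf
      rw [Finset.disjoint_singleton_right]
      constructor
      · intro hdis hug
        exact Finset.disjoint_left.mp hdis hug hgu
      · intro huf
        rw [Finset.disjoint_left]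
        intro a haf hag
        exact huf ((hcross f hf g hgP a haf hag) ▸ haf)
  -- split the edge sum
  have hfilsplit : T.edges.filter (fun f => u ∈ f)
      = H.edges.filter (fun f => u ∈ f) ∪ (loosePathEdges r d w).filter (fun g => u ∈ g) := by
    rw [hTe, Finset.filter_union]
  have hfildisj : Disjoint (H.edges.filter (fun f => u ∈ f))
      ((loosePathEdges r d w).filter (fun g => u ∈ g)) := by
    rw [Finset.disjoint_left]
    intro e he1 he2
    rw [Finset.mem_filter] at he1 he2
    exact hpath_notH e he2.1 he1.1
  rw [hfilsplit, Finset.sum_union hfildisj, hTu,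
    Finset.sum_congr rfl hTf, Finset.sum_congr rfl hTg, ← Finset.sum_mul, ← Finset.mul_sum]
  -- deletion in P at w c
  have hPdel := matchPoly_delete hr1 P hPwf hPun (w c) (hwc ▸ huP) x
  have hfilP : P.edges.filter (fun f => w c ∈ f)
      = (loosePathEdges r d w).filter (fun g => u ∈ g) := by
    rw [hPe, hwc]
  rw [hfilP] at hPdel
  have hsumP : ∑ g ∈ (loosePathEdges r d w).filter (fun g => u ∈ g),
      (P.removeVerts g).matchPoly r x
      = x * (P.removeVerts {w c}).matchPoly r x - P.matchPoly r x := by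
    linarith [hPdel]
  rw [hsumP]
  have hPpoly : P.matchPoly r x = pathPoly r d x := matchPoly_mkPath r d w hinj x
  rw [hPpoly]
  ring


lemma matchPoly_isLoosePath {P : FinHypergraph α} {r m : ℕ} (h : IsLoosePath r m P) (x : ℝ) :
    P.matchPoly r x = pathPoly r m x := by
  obtain ⟨w, hinj, hv, he⟩ := h
  have hPm : P = mkPath r m w := by
    obtain ⟨pv, pe⟩ := P
    simp only [mkPath, FinHypergraph.mk.injEq]
    exact ⟨hv, he⟩
  rw [hPm, matchPoly_mkPath r m w hinj]

end FinHypergraph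

open FinHypergraph

/-- For `r ≥ 3`, `d ≥ 3`, an `r`-uniform supertree `H` with a vertex
`u`, and `2 ≤ i ≤ d`,
`φ(P_d^r(e_{⌈d/2⌉},u)H, x) − φ(P_d^r(v_i,u)H, x)
  = x^(r−3)·( Σ_{e ∈ E_u(H)} φ(H−V(e),x) )·
    ( x^(r−1)·φ(P_{i−2}^r,x)·φ(P_{d−i}^r,x) − φ(P_{⌊d/2⌋}^r,x)·φ(P_{⌈d/2⌉−1}^r,x) )`. -/
theorem matchPoly_core_sub_joint_identify {α : Type*} (r d : ℕ) (hr : 3 ≤ r) (hd : 3 ≤ d)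
    (H : FinHypergraph α) (hH : H.IsSupertree r) (u : α) (hu : u ∈ H.verts)
    (i : ℕ) (hi2 : 2 ≤ i) (hid : i ≤ d)
    (c : ℕ) (hc1 : ((d + 1) / 2 - 1) * (r - 1) < c) (hc2 : c < ((d + 1) / 2) * (r - 1))
    (A B P1 P2 Q1 Q2 : FinHypergraph α)
    (hA : IsPathIdentify r d c H u A)
    (hB : IsPathIdentify r d ((i - 1) * (r - 1)) H u B)
    (hP1 : IsLoosePath r (i - 2) P1) (hP2 : IsLoosePath r (d - i) P2)
    (hQ1 : IsLoosePath r (d / 2) Q1) (hQ2 : IsLoosePath r ((d + 1) / 2 - 1) Q2) :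
    ∀ x : ℝ, A.matchPoly r x - B.matchPoly r x
      = x ^ (r - 3) *
          (∑ e ∈ H.edges.filter (fun e => u ∈ e), (H.removeVerts e).matchPoly r x) *
          (x ^ (r - 1) * P1.matchPoly r x * P2.matchPoly r x
            - Q1.matchPoly r x * Q2.matchPoly r x) := by
  intro x
  obtain ⟨hHwf, hHun, -, -⟩ := hH
  have hr1 : 1 ≤ r := by omega
  have hkpos : 0 < r - 1 := by omega
  set q := (d + 1) / 2 with hq
  have hq2 : 2 ≤ q := by omega
  have hqd : q ≤ d := by omega
  obtain ⟨wa, hainj, hwac, hanew, hAv, hAe⟩ := hA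
  obtain ⟨wb, hbinj, hwbc, hbnew, hBv, hBe⟩ := hB
  have hqD : q * (r - 1) ≤ d * (r - 1) := Nat.mul_le_mul_right _ hqd
  have hcD : c ≤ d * (r - 1) := by omega
  have hcBD : (i - 1) * (r - 1) ≤ d * (r - 1) := Nat.mul_le_mul_right _ (by omega)
  have hAeq := matchPoly_identify r d c hr H hHwf hHun u hu hcD wa hainj hwac hanew
    A hAv hAe x
  have hBeq := matchPoly_identify r d ((i - 1) * (r - 1)) hr H hHwf hHun u hu hcBD wb
    hbinj hwbc hbnew B hBv hBe x
  -- arithmetic facts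
  have e1 : (i - 1) * (r - 1) = i * (r - 1) - 1 * (r - 1) := by rw [← Nat.sub_mul]
  have e2 : (i - 2) * (r - 1) = i * (r - 1) - 2 * (r - 1) := by rw [← Nat.sub_mul]
  have e3 : 2 * (r - 1) ≤ i * (r - 1) := Nat.mul_le_mul_right _ hi2
  have eq1 : (q - 1) * (r - 1) = q * (r - 1) - 1 * (r - 1) := by rw [← Nat.sub_mul]
  have eq2 : 1 * (r - 1) ≤ q * (r - 1) := Nat.mul_le_mul_right _ (by omega)
  -- contention for A
  have hcontA : ∀ j, j < d →
      (c ∈ Finset.Icc (j * (r - 1)) ((j + 1) * (r - 1)) ↔ q - 1 ≤ j ∧ j < q) := by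
    intro j hj
    rw [Finset.mem_Icc]
    constructor
    · rintro ⟨h1, h2⟩
      have hjq : j < q := lt_of_mul_lt_mul_right (lt_of_le_of_lt h1 hc2) (Nat.zero_le _)
      have hjq2 : q - 1 < j + 1 :=
        lt_of_mul_lt_mul_right (lt_of_lt_of_le hc1 h2) (Nat.zero_le _)
      omega
    · rintro ⟨h1, h2⟩
      have hjq : j = q - 1 := by omega
      subst hjq
      have hsucc : q - 1 + 1 = q := by omega
      rw [hsucc]
      exact ⟨le_of_lt hc1, le_of_lt hc2⟩
  have hremA := matchPoly_mkPath_remove r d hr wa hainj c (q - 1) q hc1 hc2 hqd hcontA x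
  -- contention for B
  have hcB1 : (i - 2) * (r - 1) < (i - 1) * (r - 1) := by omega
  have hcB2 : (i - 1) * (r - 1) < i * (r - 1) := by omega
  have hcontB : ∀ j, j < d →
      ((i - 1) * (r - 1) ∈ Finset.Icc (j * (r - 1)) ((j + 1) * (r - 1)) ↔
        i - 2 ≤ j ∧ j < i) := by
    intro j hj
    rw [Finset.mem_Icc]
    constructor
    · rintro ⟨h1, h2⟩
      have hji : j ≤ i - 1 := Nat.le_of_mul_le_mul_right h1 hkpos
      have hij : i - 1 ≤ j + 1 := Nat.le_of_mul_le_mul_right h2 hkpos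
      omega
    · rintro ⟨h1, h2⟩
      constructor
      · exact Nat.mul_le_mul_right _ (by omega)
      · exact Nat.mul_le_mul_right _ (by omega)
  have hremB := matchPoly_mkPath_remove r d hr wb hbinj ((i - 1) * (r - 1)) (i - 2) i
    hcB1 hcB2 hid hcontB x
  -- assemble
  rw [hAeq, hBeq, hremA, hremB, matchPoly_isLoosePath hP1 x, matchPoly_isLoosePath hP2 x,
    matchPoly_isLoosePath hQ1 x, matchPoly_isLoosePath hQ2 x]
  have hEB : (i - (i - 2)) * (r - 1) - 2 = (r - 3) + (r - 1) := by
    have h2i : i - (i - 2) = 2 := by omega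
    rw [h2i]
    omega
  have hEA : (q - (q - 1)) * (r - 1) - 2 = r - 3 := by
    have h1q : q - (q - 1) = 1 := by omega
    rw [h1q]
    omega
  have hdq : d - q = d / 2 := by omega
  rw [hEB, hEA, hdq, pow_add]
  ring
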